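/- Let G be a topological group acting on a manifold M, F a subgroup of G, and (H,F) a pair with H ⊆ G. Suppose triples (V₁,U₁,C₁) and (V₂,U₂,C₂) of subsets of M (with C_i ⊆ U_i ∩ V_i) both have the weak extension property for (H,F), and V₁ ∩ V₂ = ∅. Then the triple (V₁ ∪ V₂, U₁ ∪ U₂, C₁ ∪ C₂) also has the weak extension property for (H,F). -/

import Mathlib

open unitInterval Topology

section

variable {G M : Type*} [Group G] [TopologicalSpace G] [IsTopologicalGroup G]
  [TopologicalSpace M] [MulAction G M] [ContinuousSMul G M]

/-- The inclusion map `U ⊆ M` as a continuous map. -/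
def inclMap (U : Set M) : C(↥U, M) := ⟨fun x => (x : M), continuous_subtype_val⟩

/-- The set `ℰ^H(U, M)` of restrictions to `U` of homeomorphisms induced by
elements of `H`, inside `C(U, M)` with the compact-open topology. -/
def EHset (H : Set G) (U : Set M) : Set C(↥U, M) :=
  {f | ∃ h ∈ H, ∀ x : ↥U, f x = h • (x : M)}

/-- The triple `(V, U, C)` has the weak extension property for `(H, F)`: there is a
neighborhood `𝒰` of the inclusion `i_U` in `ℰ^H(U, M)` and a homotopy
`s : 𝒰 × [0,1] → F(V)` with `s₀(f) = e`, `s₁(f)` agreeing with `f` on `C`, and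
`s_t(i_U) = e`. -/
def WEP (H : Set G) (F : Subgroup G) (V U C : Set M) (hCU : C ⊆ U) : Prop :=
  ∃ 𝒰 ∈ 𝓝[EHset H U] (inclMap U), ∃ s : ↥𝒰 × I → G,
    Continuous s ∧
    (∀ (f : ↥𝒰) (t : I), s (f, t) ∈ F) ∧
    (∀ (f : ↥𝒰) (t : I), ∀ y ∉ V, s (f, t) • y = y) ∧
    (∀ f : ↥𝒰, s (f, 0) = 1) ∧
    (∀ (f : ↥𝒰) (x : M) (hx : x ∈ C), s (f, 1) • x = (f : C(↥U, M)) ⟨x, hCU hx⟩) ∧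
    (∀ (f : ↥𝒰) (t : I), (f : C(↥U, M)) = inclMap U → s (f, t) = 1)


private lemma smul_mem_of_fix {G M : Type*} [Group G] [MulAction G M]
    (g : G) (V : Set M) (h : ∀ y ∉ V, g • y = y) {x : M} (hx : x ∈ V) : g • x ∈ V := by
  by_contra hy
  exact hy (by have := h (g • x) hy; have := smul_left_cancel g this; rw [this]; exact hx)

/-- If two triples with disjoint supports `V₁ ∩ V₂ = ∅` both have the weak extension
property for `(H, F)` with `F` a subgroup, then so does their union. -/
theorem WEP_union_of_disjoint
    (H : Set G) (F : Subgroup G)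
    (V₁ U₁ C₁ V₂ U₂ C₂ : Set M)
    (hCU₁ : C₁ ⊆ U₁) (hCV₁ : C₁ ⊆ V₁) (hCU₂ : C₂ ⊆ U₂) (hCV₂ : C₂ ⊆ V₂)
    (hdisj : Disjoint V₁ V₂)
    (w₁ : WEP H F V₁ U₁ C₁ hCU₁) (w₂ : WEP H F V₂ U₂ C₂ hCU₂) :
    WEP H F (V₁ ∪ V₂) (U₁ ∪ U₂) (C₁ ∪ C₂) (Set.union_subset_union hCU₁ hCU₂) := by
  obtain ⟨𝒰₁, h𝒰₁, s₁, hc₁, hF₁, hV₁, h0₁, h1₁, hi₁⟩ := w₁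
  obtain ⟨𝒰₂, h𝒰₂, s₂, hc₂, hF₂, hV₂, h0₂, h1₂, hi₂⟩ := w₂
  set ι₁ : C(↥U₁, ↥(U₁ ∪ U₂)) :=
    ⟨Set.inclusion Set.subset_union_left, continuous_inclusion _⟩ with hι₁
  set ι₂ : C(↥U₂, ↥(U₁ ∪ U₂)) :=
    ⟨Set.inclusion Set.subset_union_right, continuous_inclusion _⟩ with hι₂
  set r₁ : C(↥(U₁ ∪ U₂), M) → C(↥U₁, M) := fun f => f.comp ι₁ with hr₁
  set r₂ : C(↥(U₁ ∪ U₂), M) → C(↥U₂, M) := fun f => f.comp ι₂ with hr₂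
  have hri₁ : r₁ (inclMap (U₁ ∪ U₂)) = inclMap U₁ := by ext x; rfl
  have hri₂ : r₂ (inclMap (U₁ ∪ U₂)) = inclMap U₂ := by ext x; rfl
  have hmaps₁ : Set.MapsTo r₁ (EHset H (U₁ ∪ U₂)) (EHset H U₁) := by
    rintro f ⟨h, hH, hf⟩; exact ⟨h, hH, fun x => hf (ι₁ x)⟩
  have hmaps₂ : Set.MapsTo r₂ (EHset H (U₁ ∪ U₂)) (EHset H U₂) := by
    rintro f ⟨h, hH, hf⟩; exact ⟨h, hH, fun x => hf (ι₂ x)⟩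
  have hrc₁ : Continuous r₁ := ContinuousMap.continuous_precomp ι₁
  have hrc₂ : Continuous r₂ := ContinuousMap.continuous_precomp ι₂
  have ht₁ : Filter.Tendsto r₁ (𝓝[EHset H (U₁ ∪ U₂)] (inclMap (U₁ ∪ U₂)))
      (𝓝[EHset H U₁] (inclMap U₁)) := by
    rw [← hri₁]
    exact hrc₁.continuousAt.continuousWithinAt.tendsto_nhdsWithin hmaps₁
  have ht₂ : Filter.Tendsto r₂ (𝓝[EHset H (U₁ ∪ U₂)] (inclMap (U₁ ∪ U₂)))
      (𝓝[EHset H U₂] (inclMap U₂)) := by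
    rw [← hri₂]
    exact hrc₂.continuousAt.continuousWithinAt.tendsto_nhdsWithin hmaps₂
  refine ⟨r₁ ⁻¹' 𝒰₁ ∩ r₂ ⁻¹' 𝒰₂, Filter.inter_mem (ht₁ h𝒰₁) (ht₂ h𝒰₂), ?_⟩
  set 𝒰 : Set C(↥(U₁ ∪ U₂), M) := r₁ ⁻¹' 𝒰₁ ∩ r₂ ⁻¹' 𝒰₂ with h𝒰
  set p₁ : ↥𝒰 → ↥𝒰₁ := fun f => ⟨r₁ f, f.2.1⟩ with hp₁
  set p₂ : ↥𝒰 → ↥𝒰₂ := fun f => ⟨r₂ f, f.2.2⟩ with hp₂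
  have hpc₁ : Continuous p₁ := (hrc₁.comp continuous_subtype_val).subtype_mk _
  have hpc₂ : Continuous p₂ := (hrc₂.comp continuous_subtype_val).subtype_mk _
  refine ⟨fun q => s₁ (p₁ q.1, q.2) * s₂ (p₂ q.1, q.2), ?_, ?_, ?_, ?_, ?_, ?_⟩
  · exact (hc₁.comp ((hpc₁.comp continuous_fst).prodMk continuous_snd)).mul
      (hc₂.comp ((hpc₂.comp continuous_fst).prodMk continuous_snd))
  · exact fun f t => mul_mem (hF₁ _ _) (hF₂ _ _)
  · intro f t y hy
    rw [mul_smul, hV₂ _ _ y fun h => hy (Or.inr h), hV₁ _ _ y fun h => hy (Or.inl h)]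
  · intro f; show s₁ (p₁ f, 0) * s₂ (p₂ f, 0) = 1; rw [h0₁, h0₂, mul_one]
  · rintro f x (hx | hx)
    · have hxV₂ : x ∉ V₂ := fun h => (hdisj.le_bot ⟨hCV₁ hx, h⟩).elim
      rw [mul_smul, hV₂ _ _ x hxV₂, h1₁ (p₁ f) x hx]
      rfl
    · rw [mul_smul, h1₂ (p₂ f) x hx]
      have hmem : (s₂ (p₂ f, 1)) • x ∈ V₂ :=
        smul_mem_of_fix _ _ (hV₂ (p₂ f) 1) (hCV₂ hx)
      rw [h1₂ (p₂ f) x hx] at hmem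
      have : ((p₂ f : C(↥U₂, M)) ⟨x, hCU₂ hx⟩) ∉ V₁ :=
        fun h => (hdisj.le_bot ⟨h, hmem⟩).elim
      rw [hV₁ _ _ _ this]
      rfl
  · intro f t hf
    have e₁ : (p₁ f : C(↥U₁, M)) = inclMap U₁ := by
      have : r₁ (f : C(↥(U₁ ∪ U₂), M)) = r₁ (inclMap (U₁ ∪ U₂)) := by rw [hf]
      rw [hri₁] at this; exact this
    have e₂ : (p₂ f : C(↥U₂, M)) = inclMap U₂ := by
      have : r₂ (f : C(↥(U₁ ∪ U₂), M)) = r₂ (inclMap (U₁ ∪ U₂)) := by rw [hf]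
      rw [hri₂] at this; exact this
    show s₁ (p₁ f, t) * s₂ (p₂ f, t) = 1
    rw [hi₁ _ t e₁, hi₂ _ t e₂, mul_one]

end
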